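/- (Beyond exactly m₂−1 facets, case m₃ > m₂ > m₁ ≥ 2) Assume m₃ > m₂ > m₁ ≥ 2 and let v₀ ∈ V₂, so that Δ = conv(S ∖ {v₀}) is an n-simplex whose facets are opposite its vertices. Then: (a) for every v ∈ V₂ ∖ {v₀} there exists an affine map f : ℝ^(2n) → ℝ vanishing on S ∖ {v₀, v} with f(v) > 0 and f(v₀) < 0 (v₀ is beyond the facet of Δ opposite v); and (b) for every w ∈ V₁ ∪ V₃, every affine map f : ℝ^(2n) → ℝ vanishing on S ∖ {v₀, w} with f(w) > 0 satisfies f(v₀) > 0 (v₀ is not beyond the facet of Δ opposite w). Hence v₀ is beyond exactly m₂ − 1 facets of Δ. -/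

import Mathlib

private lemma sum_split3 {α β : Type*} [DecidableEq α] [AddCommMonoid β]
    {V1 V2 V3 S : Finset α}
    (hunion : V1 ∪ V2 ∪ V3 = S) (hd12 : Disjoint V1 V2) (hd13 : Disjoint V1 V3)
    (hd23 : Disjoint V2 V3) (g : α → β) :
    ∑ u ∈ S, g u = ∑ u ∈ V1, g u + ∑ u ∈ V2, g u + ∑ u ∈ V3, g u := by
  rw [← hunion, Finset.sum_union (Finset.disjoint_union_left.mpr ⟨hd13, hd23⟩),
    Finset.sum_union hd12]

private noncomputable def liftAff {n : ℕ} (F : ((Fin n → ℝ) × ℝ) →ₗ[ℝ] ℝ) : (Fin n → ℝ) →ᵃ[ℝ] ℝ where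
  toFun x := F (x, 1)
  linear := F.comp (LinearMap.inl ℝ _ ℝ)
  map_vadd' p v := by
    simp only [LinearMap.comp_apply, LinearMap.inl_apply, vadd_eq_add]
    rw [← map_add]
    congr 1
    simp [Prod.ext_iff]

private lemma liftAff_apply {n : ℕ} (F : ((Fin n → ℝ) × ℝ) →ₗ[ℝ] ℝ) (x : Fin n → ℝ) :
    liftAff F x = F (x, 1) := rfl

private lemma affine_apply_sum {n : ℕ} (f : (Fin n → ℝ) →ᵃ[ℝ] ℝ) (s : Finset (Fin n → ℝ))
    (w : (Fin n → ℝ) → ℝ) (hw : ∑ u ∈ s, w u = 1) :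
    f (∑ u ∈ s, w u • u) = ∑ u ∈ s, w u * f u := by
  have h1 : ∀ x, f x = f.linear x + f 0 := fun x => by
    conv_lhs => rw [f.decomp]
    rfl
  rw [h1, map_sum]
  simp only [map_smul, smul_eq_mul]
  calc (∑ u ∈ s, w u * f.linear u) + f 0
      = (∑ u ∈ s, w u * f.linear u) + (∑ u ∈ s, w u) * f 0 := by rw [hw, one_mul]
    _ = ∑ u ∈ s, (w u * f.linear u + w u * f 0) := by
        rw [Finset.sum_add_distrib, Finset.sum_mul]
    _ = ∑ u ∈ s, w u * f u := by
        refine Finset.sum_congr rfl fun u _ => ?_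
        rw [h1 u]; ring

set_option maxHeartbeats 2000000 in
theorem stmt_9
    (n : ℕ) (hn : 0 < n)
    (S V1 V2 V3 : Finset (Fin (2 * n) → ℝ))
    (h01 : ∀ v ∈ S, ∀ i, v i = 0 ∨ v i = 1)
    (hScard : S.card = n + 2)
    (hunion : V1 ∪ V2 ∪ V3 = S)
    (hd12 : Disjoint V1 V2) (hd13 : Disjoint V1 V3) (hd23 : Disjoint V2 V3)
    (hne1 : V1.Nonempty) (hne2 : V2.Nonempty) (hne3 : V3.Nonempty)
    (hsum1 : ∑ v ∈ V1, v = fun _ => (1 : ℝ))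
    (hsum2 : ∑ v ∈ V2, v = fun _ => (1 : ℝ))
    (hsum3 : ∑ v ∈ V3, v = fun _ => (1 : ℝ))
    (hspan : Module.finrank ℝ (Submodule.span ℝ (S : Set (Fin (2 * n) → ℝ))) = n)
    (hm1 : 2 ≤ V1.card) (h12 : V1.card < V2.card) (h23 : V2.card < V3.card)
    : ∀ v₀ ∈ V2,
      ((∀ v ∈ V2 \ {v₀}, ∃ f : (Fin (2 * n) → ℝ) →ᵃ[ℝ] ℝ,
          (∀ u ∈ S \ {v₀, v}, f u = 0) ∧ 0 < f v ∧ f v₀ < 0) ∧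
        (∀ w ∈ V1 ∪ V3, ∀ f : (Fin (2 * n) → ℝ) →ᵃ[ℝ] ℝ,
          (∀ u ∈ S \ {v₀, w}, f u = 0) → 0 < f w → 0 < f v₀) ∧
        {v | v ∈ S \ {v₀} ∧ ∃ f : (Fin (2 * n) → ℝ) →ᵃ[ℝ] ℝ,
            (∀ u ∈ S \ {v₀, v}, f u = 0) ∧ 0 < f v ∧ f v₀ < 0}.ncard = V2.card - 1) := by
  classical
  intro v₀ hv₀
  -- basic membership facts
  have hsub1 : V1 ⊆ S := by
    rw [← hunion]
    exact fun x hx => Finset.mem_union_left _ (Finset.mem_union_left _ hx)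
  have hsub2 : V2 ⊆ S := by
    rw [← hunion]
    exact fun x hx => Finset.mem_union_left _ (Finset.mem_union_right _ hx)
  have hsub3 : V3 ⊆ S := by
    rw [← hunion]
    exact fun x hx => Finset.mem_union_right _ hx
  have hv₀S : v₀ ∈ S := hsub2 hv₀
  set M1 : ℝ := (V1.card : ℝ) with hM1
  set M2 : ℝ := (V2.card : ℝ) with hM2
  set M3 : ℝ := (V3.card : ℝ) with hM3
  have hM12 : M1 < M2 := by rw [hM1, hM2]; exact_mod_cast h12
  have hM23 : M2 < M3 := by rw [hM2, hM3]; exact_mod_cast h23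
  have hN : (0 : ℝ) < M3 - M1 := by linarith
  -- the canonical affine relation
  set c : (Fin (2 * n) → ℝ) → ℝ := fun u => if u ∈ V1 then M3 - M2 else if u ∈ V2 then M1 - M3 else M2 - M1
    with hcdef
  have hc1 : ∀ u ∈ V1, c u = M3 - M2 := fun u hu => by simp only [hcdef, if_pos hu]
  have hc2 : ∀ u ∈ V2, c u = M1 - M3 := fun u hu => by
    have h1 : u ∉ V1 := Finset.disjoint_right.mp hd12 hu
    simp only [hcdef, if_neg h1, if_pos hu]
  have hc3 : ∀ u ∈ V3, c u = M2 - M1 := fun u hu => by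
    have h1 : u ∉ V1 := Finset.disjoint_right.mp hd13 hu
    have h2 : u ∉ V2 := Finset.disjoint_right.mp hd23 hu
    simp only [hcdef, if_neg h1, if_neg h2]
  have hF1 : ∑ u ∈ S, c u • u = 0 := by
    rw [sum_split3 hunion hd12 hd13 hd23]
    have e1 : ∑ u ∈ V1, c u • u = (M3 - M2) • (fun _ => (1 : ℝ) : (Fin (2 * n) → ℝ)) := by
      rw [← hsum1, Finset.smul_sum]
      exact Finset.sum_congr rfl fun u hu => by rw [hc1 u hu]
    have e2 : ∑ u ∈ V2, c u • u = (M1 - M3) • (fun _ => (1 : ℝ) : (Fin (2 * n) → ℝ)) := by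
      rw [← hsum2, Finset.smul_sum]
      exact Finset.sum_congr rfl fun u hu => by rw [hc2 u hu]
    have e3 : ∑ u ∈ V3, c u • u = (M2 - M1) • (fun _ => (1 : ℝ) : (Fin (2 * n) → ℝ)) := by
      rw [← hsum3, Finset.smul_sum]
      exact Finset.sum_congr rfl fun u hu => by rw [hc3 u hu]
    rw [e1, e2, e3, ← add_smul, ← add_smul]
    have : (M3 - M2) + (M1 - M3) + (M2 - M1) = 0 := by ring
    rw [this, zero_smul]
  have hF2 : ∑ u ∈ S, c u = 0 := by
    rw [sum_split3 hunion hd12 hd13 hd23]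
    have g1 : ∑ u ∈ V1, c u = M1 * (M3 - M2) := by
      rw [Finset.sum_congr rfl hc1, Finset.sum_const, nsmul_eq_mul]
    have g2 : ∑ u ∈ V2, c u = M2 * (M1 - M3) := by
      rw [Finset.sum_congr rfl hc2, Finset.sum_const, nsmul_eq_mul]
    have g3 : ∑ u ∈ V3, c u = M3 * (M2 - M1) := by
      rw [Finset.sum_congr rfl hc3, Finset.sum_const, nsmul_eq_mul]
    rw [g1, g2, g3]; ring
  have hcv₀ : c v₀ = M1 - M3 := hc2 v₀ hv₀
  -- barycentric weights
  set lam : (Fin (2 * n) → ℝ) → ℝ := fun u => c u / (M3 - M1) with hlamdef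
  have hsumcE : ∑ u ∈ S.erase v₀, c u = M3 - M1 := by
    have h := Finset.add_sum_erase S c hv₀S
    rw [hF2, hcv₀] at h
    linarith
  have hlamsum : ∑ u ∈ S.erase v₀, lam u = 1 := by
    simp only [hlamdef]
    rw [← Finset.sum_div, hsumcE, div_self hN.ne']
  have hvec : ∑ u ∈ S.erase v₀, c u • u = (M3 - M1) • v₀ := by
    have h : c v₀ • v₀ + ∑ x ∈ S.erase v₀, c x • x = 0 := by
      have h0 := Finset.add_sum_erase S (fun u => c u • u) hv₀S
      rw [hF1] at h0
      simpa using h0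
    rw [hcv₀] at h
    have h2 : ∑ u ∈ S.erase v₀, c u • u = -((M1 - M3) • v₀) := by
      rw [add_comm] at h
      exact add_eq_zero_iff_eq_neg.mp h
    rw [h2, ← neg_smul]
    congr 1
    ring
  have hcomb : ∑ u ∈ S.erase v₀, lam u • u = v₀ := by
    have step : ∑ u ∈ S.erase v₀, lam u • u = (M3 - M1)⁻¹ • ∑ u ∈ S.erase v₀, c u • u := by
      rw [Finset.smul_sum]
      exact Finset.sum_congr rfl fun u _ => by
        simp only [hlamdef]
        rw [smul_smul, div_eq_inv_mul]
    rw [step, hvec, smul_smul, inv_mul_cancel₀ hN.ne', one_smul]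
  have hlam2 : ∀ u ∈ V2, lam u = -1 := fun u hu => by
    simp only [hlamdef]
    rw [hc2 u hu, div_eq_iff hN.ne']
    ring
  have hwne : ∀ w ∈ V1 ∪ V3, w ≠ v₀ := by
    intro w hw
    rcases Finset.mem_union.mp hw with h | h
    · exact fun he => (Finset.disjoint_left.mp hd12 h) (he ▸ hv₀)
    · exact fun he => (Finset.disjoint_right.mp hd23 h) (he ▸ hv₀)
  have hlampos : ∀ w ∈ V1 ∪ V3, 0 < lam w := by
    intro w hw
    rcases Finset.mem_union.mp hw with h | h
    · simp only [hlamdef]; rw [hc1 w h]; exact div_pos (by linarith) hN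
    · simp only [hlamdef]; rw [hc3 w h]; exact div_pos (by linarith) hN
  -- Part (b)
  have partB : ∀ w ∈ V1 ∪ V3, ∀ f : (Fin (2 * n) → ℝ) →ᵃ[ℝ] ℝ,
      (∀ u ∈ S \ {v₀, w}, f u = 0) → 0 < f w → 0 < f v₀ := by
    intro w hw f hf hfw
    have hwS : w ∈ S := by
      rcases Finset.mem_union.mp hw with h | h
      exacts [hsub1 h, hsub3 h]
    have hwv₀ : w ≠ v₀ := hwne w hw
    have key : f v₀ = ∑ u ∈ S.erase v₀, lam u * f u := by
      conv_lhs => rw [← hcomb]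
      rw [affine_apply_sum f _ _ hlamsum]
    rw [key, Finset.sum_eq_single_of_mem w (Finset.mem_erase.mpr ⟨hwv₀, hwS⟩)]
    · exact mul_pos (hlampos w hw) hfw
    · intro u hu hne
      obtain ⟨h1, huS⟩ := Finset.mem_erase.mp hu
      have : f u = 0 := hf u (by
        rw [Finset.mem_sdiff]
        refine ⟨huS, ?_⟩
        simp [h1, hne])
      rw [this, mul_zero]
  -- the kernel of the linear-combination map
  set φ : (↥S → ℝ) →ₗ[ℝ] (Fin (2 * n) → ℝ) :=
    Fintype.linearCombination ℝ (fun u : ↥S => (u : (Fin (2 * n) → ℝ))) with hφdef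
  have hrange : LinearMap.range φ = Submodule.span ℝ (S : Set (Fin (2 * n) → ℝ)) := by
    rw [hφdef, Fintype.range_linearCombination]
    congr 1
    ext x
    simp
  have hkerrank : Module.finrank ℝ (LinearMap.ker φ) = 2 := by
    have h := LinearMap.finrank_range_add_finrank_ker φ
    rw [hrange, hspan, Module.finrank_fintype_fun_eq_card, Fintype.card_coe, hScard] at h
    omega
  set ρ1 : (Fin (2 * n) → ℝ) → ℝ := fun u => if u ∈ V1 then 1 else if u ∈ V2 then -1 else 0 with hρ1def
  set ρ2 : (Fin (2 * n) → ℝ) → ℝ := fun u => if u ∈ V1 then 1 else if u ∈ V3 then -1 else 0 with hρ2def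
  have hρ1V1 : ∀ u ∈ V1, ρ1 u = 1 := fun u hu => by simp only [hρ1def, if_pos hu]
  have hρ1V2 : ∀ u ∈ V2, ρ1 u = -1 := fun u hu => by
    simp only [hρ1def, if_neg (Finset.disjoint_right.mp hd12 hu), if_pos hu]
  have hρ1V3 : ∀ u ∈ V3, ρ1 u = 0 := fun u hu => by
    simp only [hρ1def, if_neg (Finset.disjoint_right.mp hd13 hu),
      if_neg (Finset.disjoint_right.mp hd23 hu)]
  have hρ2V1 : ∀ u ∈ V1, ρ2 u = 1 := fun u hu => by simp only [hρ2def, if_pos hu]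
  have hρ2V2 : ∀ u ∈ V2, ρ2 u = 0 := fun u hu => by
    simp only [hρ2def, if_neg (Finset.disjoint_right.mp hd12 hu),
      if_neg (Finset.disjoint_left.mp hd23 hu)]
  have hρ2V3 : ∀ u ∈ V3, ρ2 u = -1 := fun u hu => by
    simp only [hρ2def, if_neg (Finset.disjoint_right.mp hd13 hu), if_pos hu]
  set r1 : ↥S → ℝ := fun u => ρ1 ↑u with hr1def
  set r2 : ↥S → ℝ := fun u => ρ2 ↑u with hr2def
  have hφr1 : φ r1 = 0 := by
    rw [hφdef, Fintype.linearCombination_apply]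
    have : ∑ u : ↥S, r1 u • (u : (Fin (2 * n) → ℝ)) = ∑ u ∈ S, ρ1 u • u := by
      rw [hr1def]
      exact Finset.sum_coe_sort S (fun u => ρ1 u • u)
    rw [this, sum_split3 hunion hd12 hd13 hd23]
    have a1 : ∑ u ∈ V1, ρ1 u • u = (1 : ℝ) • (fun _ => (1 : ℝ) : (Fin (2 * n) → ℝ)) := by
      rw [← hsum1, Finset.smul_sum]
      exact Finset.sum_congr rfl fun u hu => by rw [hρ1V1 u hu]
    have a2 : ∑ u ∈ V2, ρ1 u • u = (-1 : ℝ) • (fun _ => (1 : ℝ) : (Fin (2 * n) → ℝ)) := by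
      rw [← hsum2, Finset.smul_sum]
      exact Finset.sum_congr rfl fun u hu => by rw [hρ1V2 u hu]
    have a3 : ∑ u ∈ V3, ρ1 u • u = 0 :=
      Finset.sum_eq_zero fun u hu => by rw [hρ1V3 u hu, zero_smul]
    rw [a1, a2, a3, ← add_smul]
    norm_num
  have hφr2 : φ r2 = 0 := by
    rw [hφdef, Fintype.linearCombination_apply]
    have : ∑ u : ↥S, r2 u • (u : (Fin (2 * n) → ℝ)) = ∑ u ∈ S, ρ2 u • u := by
      rw [hr2def]
      exact Finset.sum_coe_sort S (fun u => ρ2 u • u)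
    rw [this, sum_split3 hunion hd12 hd13 hd23]
    have a1 : ∑ u ∈ V1, ρ2 u • u = (1 : ℝ) • (fun _ => (1 : ℝ) : (Fin (2 * n) → ℝ)) := by
      rw [← hsum1, Finset.smul_sum]
      exact Finset.sum_congr rfl fun u hu => by rw [hρ2V1 u hu]
    have a2 : ∑ u ∈ V2, ρ2 u • u = 0 :=
      Finset.sum_eq_zero fun u hu => by rw [hρ2V2 u hu, zero_smul]
    have a3 : ∑ u ∈ V3, ρ2 u • u = (-1 : ℝ) • (fun _ => (1 : ℝ) : (Fin (2 * n) → ℝ)) := by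
      rw [← hsum3, Finset.smul_sum]
      exact Finset.sum_congr rfl fun u hu => by rw [hρ2V3 u hu]
    rw [a1, a2, a3, add_zero, ← add_smul]
    norm_num
  have hr1sum : ∑ u : ↥S, r1 u = M1 - M2 := by
    rw [hr1def, Finset.sum_coe_sort S ρ1, sum_split3 hunion hd12 hd13 hd23]
    rw [Finset.sum_congr rfl hρ1V1, Finset.sum_congr rfl hρ1V2, Finset.sum_congr rfl hρ1V3]
    simp only [Finset.sum_const, nsmul_eq_mul, mul_one, mul_neg, Finset.sum_const_zero, add_zero, hM1, hM2]
    ring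
  have hr2sum : ∑ u : ↥S, r2 u = M1 - M3 := by
    rw [hr2def, Finset.sum_coe_sort S ρ2, sum_split3 hunion hd12 hd13 hd23]
    rw [Finset.sum_congr rfl hρ2V1, Finset.sum_congr rfl hρ2V2, Finset.sum_congr rfl hρ2V3]
    simp only [Finset.sum_const, nsmul_eq_mul, mul_one, mul_neg, Finset.sum_const_zero, add_zero, zero_add, hM1, hM3]
    ring
  obtain ⟨w3, hw3⟩ := hne3
  have hw3S : w3 ∈ S := hsub3 hw3
  have hr1v₀ : r1 ⟨v₀, hv₀S⟩ = -1 := hρ1V2 v₀ hv₀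
  have hr2v₀ : r2 ⟨v₀, hv₀S⟩ = 0 := hρ2V2 v₀ hv₀
  have hr1w3 : r1 ⟨w3, hw3S⟩ = 0 := hρ1V3 w3 hw3
  have hr2w3 : r2 ⟨w3, hw3S⟩ = -1 := hρ2V3 w3 hw3
  have hli : LinearIndependent ℝ ![r1, r2] := by
    rw [LinearIndependent.pair_iff]
    intro s t hst
    have h₀ := congrFun hst ⟨v₀, hv₀S⟩
    have h₁ := congrFun hst ⟨w3, hw3S⟩
    simp only [Pi.add_apply, Pi.smul_apply, smul_eq_mul, Pi.zero_apply, hr1v₀, hr2v₀,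
      hr1w3, hr2w3] at h₀ h₁
    constructor <;> linarith
  have hkerspan : LinearMap.ker φ = Submodule.span ℝ (Set.range ![r1, r2]) := by
    refine (Submodule.eq_of_le_of_finrank_eq ?_ ?_).symm
    · rw [Submodule.span_le]
      rintro x ⟨i, rfl⟩
      fin_cases i
      · exact LinearMap.mem_ker.mpr hφr1
      · exact LinearMap.mem_ker.mpr hφr2
    · rw [finrank_span_eq_card hli, hkerrank, Fintype.card_fin]
  have hker : ∀ d : (Fin (2 * n) → ℝ) → ℝ, ∑ u ∈ S, d u • u = 0 → ∑ u ∈ S, d u = 0 → d v₀ = 0 →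
      ∀ u ∈ S, d u = 0 := by
    intro d hdv hds hdv₀ u huS
    have hmem : (fun x : ↥S => d ↑x) ∈ LinearMap.ker φ := by
      rw [LinearMap.mem_ker, hφdef, Fintype.linearCombination_apply]
      rw [Finset.sum_coe_sort S (fun u => d u • u)]
      exact hdv
    rw [hkerspan] at hmem
    obtain ⟨coef, hcoef⟩ := (Submodule.mem_span_range_iff_exists_fun ℝ).mp hmem
    rw [Fin.sum_univ_two] at hcoef
    simp only [Matrix.cons_val_zero, Matrix.cons_val_one, Matrix.head_cons] at hcoef
    have h₀ := congrFun hcoef ⟨v₀, hv₀S⟩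
    simp only [Pi.add_apply, Pi.smul_apply, smul_eq_mul, hr1v₀, hr2v₀, hdv₀] at h₀
    have hc0 : coef 0 = 0 := by linarith
    have hsumd : ∑ x : ↥S, (coef 0 • r1 + coef 1 • r2) x = ∑ x : ↥S, d ↑x := by
      rw [hcoef]
    rw [Finset.sum_coe_sort S d, hds] at hsumd
    have hlhs : ∑ x : ↥S, (coef 0 • r1 + coef 1 • r2) x
        = coef 0 * (M1 - M2) + coef 1 * (M1 - M3) := by
      simp only [Pi.add_apply, Pi.smul_apply, smul_eq_mul]
      rw [Finset.sum_add_distrib, ← Finset.mul_sum, ← Finset.mul_sum, hr1sum, hr2sum]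
    rw [hlhs] at hsumd
    have hc1' : coef 1 = 0 := by
      rw [hc0] at hsumd
      have : coef 1 * (M1 - M3) = 0 := by linarith
      rcases mul_eq_zero.mp this with h | h
      · exact h
      · exfalso; linarith
    have := congrFun hcoef ⟨u, huS⟩
    simp only [Pi.add_apply, Pi.smul_apply, smul_eq_mul, hc0, hc1'] at this
    linarith [this]
  -- Part (a)
  have partA : ∀ v ∈ V2 \ {v₀}, ∃ f : (Fin (2 * n) → ℝ) →ᵃ[ℝ] ℝ,
      (∀ u ∈ S \ {v₀, v}, f u = 0) ∧ 0 < f v ∧ f v₀ < 0 := by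
    intro v hv
    rw [Finset.mem_sdiff, Finset.mem_singleton] at hv
    obtain ⟨hv2, hvne⟩ := hv
    have hvS : v ∈ S := hsub2 hv2
    set T : Finset (Fin (2 * n) → ℝ) := S \ ({v₀, v} : Finset (Fin (2 * n) → ℝ)) with hTdef
    set p : Submodule ℝ ((Fin (2 * n) → ℝ) × ℝ) := Submodule.span ℝ ((fun u => (u, (1 : ℝ))) '' ↑T) with hpdef
    have hmemT : ∀ u ∈ T, u ∈ S ∧ u ≠ v₀ ∧ u ≠ v := by
      intro u hu
      rw [hTdef, Finset.mem_sdiff, Finset.mem_insert, Finset.mem_singleton] at hu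
      push_neg at hu
      exact ⟨hu.1, hu.2.1, hu.2.2⟩
    have hsubpair : ({v₀, v} : Finset (Fin (2 * n) → ℝ)) ⊆ S := by
      intro x hx
      rcases Finset.mem_insert.mp hx with rfl | hx
      · exact hv₀S
      · rw [Finset.mem_singleton.mp hx]; exact hvS
    have hnm : ((v, (1 : ℝ)) : (Fin (2 * n) → ℝ) × ℝ) ∉ p := by
      intro hmem
      rw [hpdef, ← Finset.coe_image] at hmem
      obtain ⟨g, -, hg⟩ := Submodule.mem_span_finset.mp hmem
      have hinj : ∀ a ∈ T, ∀ b ∈ T, (fun u => (u, (1 : ℝ))) a = (fun u => (u, (1 : ℝ))) b →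
          a = b := by
        intro a _ b _ h
        exact (Prod.mk.injEq _ _ _ _).mp h |>.1
      rw [Finset.sum_image hinj] at hg
      have hfst : ∑ u ∈ T, g (u, (1 : ℝ)) • u = v := by
        have := congrArg Prod.fst hg
        simpa [Prod.fst_sum] using this
      have hsnd : ∑ u ∈ T, g (u, (1 : ℝ)) = 1 := by
        have := congrArg Prod.snd hg
        simpa [Prod.snd_sum] using this
      set d : (Fin (2 * n) → ℝ) → ℝ := fun u => if u = v then -1 else if u ∈ T then g (u, (1 : ℝ)) else 0
        with hddef
      have hdv : d v = -1 := by simp [hddef]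
      have hdv₀ : d v₀ = 0 := by
        have h1 : v₀ ≠ v := fun h => hvne h.symm
        have h2 : v₀ ∉ T := by
          rw [hTdef, Finset.mem_sdiff]
          simp
        simp [hddef, h1, h2]
      have hdT : ∀ u ∈ T, d u = g (u, (1 : ℝ)) := by
        intro u hu
        have := (hmemT u hu).2.2
        simp [hddef, this, hu]
      have hdvec : ∑ u ∈ S, d u • u = 0 := by
        rw [← Finset.sum_sdiff hsubpair, ← hTdef]
        have hp2 : ∑ u ∈ ({v₀, v} : Finset (Fin (2 * n) → ℝ)), d u • u = d v₀ • v₀ + d v • v :=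
          Finset.sum_pair (fun h => hvne h.symm)
        rw [hp2, hdv₀, hdv]
        have : ∑ u ∈ T, d u • u = v := by
          rw [← hfst]
          exact Finset.sum_congr rfl fun u hu => by rw [hdT u hu]
        rw [this]
        simp
      have hdsc : ∑ u ∈ S, d u = 0 := by
        rw [← Finset.sum_sdiff hsubpair, ← hTdef]
        have hp2 : ∑ u ∈ ({v₀, v} : Finset (Fin (2 * n) → ℝ)), d u = d v₀ + d v :=
          Finset.sum_pair (fun h => hvne h.symm)
        rw [hp2, hdv₀, hdv]
        have : ∑ u ∈ T, d u = 1 := by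
          rw [← hsnd]
          exact Finset.sum_congr rfl fun u hu => by rw [hdT u hu]
        rw [this]
        ring
      have := hker d hdvec hdsc hdv₀ v hvS
      rw [hdv] at this
      norm_num at this
    obtain ⟨F, hFne, hFmap⟩ := Submodule.exists_dual_map_eq_bot_of_notMem hnm inferInstance
    have hFp : ∀ y ∈ p, F y = 0 := by
      intro y hy
      have : F y ∈ p.map F := Submodule.mem_map_of_mem hy
      rw [hFmap] at this
      simpa using this
    set G : ((Fin (2 * n) → ℝ) × ℝ) →ₗ[ℝ] ℝ := (F (v, 1))⁻¹ • F with hGdef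
    have hGv : G (v, 1) = 1 := by
      simp only [hGdef, LinearMap.smul_apply, smul_eq_mul]
      exact inv_mul_cancel₀ hFne
    have hGp : ∀ y ∈ p, G y = 0 := by
      intro y hy
      simp only [hGdef, LinearMap.smul_apply, smul_eq_mul, hFp y hy, mul_zero]
    have hGT : ∀ u ∈ T, G (u, (1 : ℝ)) = 0 := fun u hu =>
      hGp _ (Submodule.subset_span ⟨u, by exact_mod_cast hu, rfl⟩)
    refine ⟨liftAff G, ?_, ?_, ?_⟩
    · intro u hu
      rw [liftAff_apply]
      exact hGT u hu
    · rw [liftAff_apply, hGv]; norm_num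
    · rw [liftAff_apply]
      have hlift : ((v₀, (1 : ℝ)) : (Fin (2 * n) → ℝ) × ℝ) = ∑ u ∈ S.erase v₀, lam u • ((u, (1 : ℝ)) : (Fin (2 * n) → ℝ) × ℝ) := by
        rw [Prod.ext_iff]
        constructor
        · rw [Prod.fst_sum]
          simp only [Prod.smul_mk, Prod.fst]
          exact hcomb.symm
        · rw [Prod.snd_sum]
          simp only [Prod.smul_mk, Prod.snd, smul_eq_mul, mul_one]
          exact hlamsum.symm
      rw [hlift, map_sum]
      simp only [map_smul, smul_eq_mul]
      rw [Finset.sum_eq_single_of_mem v (Finset.mem_erase.mpr ⟨hvne, hvS⟩)]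
      · rw [hGv, mul_one, hlam2 v hv2]; norm_num
      · intro u hu hne
        obtain ⟨h1, huS⟩ := Finset.mem_erase.mp hu
        have huT : u ∈ T := by
          rw [hTdef, Finset.mem_sdiff, Finset.mem_insert, Finset.mem_singleton]
          exact ⟨huS, by push_neg; exact ⟨h1, hne⟩⟩
        rw [hGT u huT, mul_zero]
  -- Part (c)
  have hsetEq : {v | v ∈ S \ {v₀} ∧ ∃ f : (Fin (2 * n) → ℝ) →ᵃ[ℝ] ℝ,
      (∀ u ∈ S \ {v₀, v}, f u = 0) ∧ 0 < f v ∧ f v₀ < 0}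
      = ↑(V2 \ ({v₀} : Finset (Fin (2 * n) → ℝ))) := by
    ext v
    simp only [Set.mem_setOf_eq, Finset.coe_sdiff, Set.mem_diff, Finset.mem_coe,
      Finset.coe_singleton, Set.mem_singleton_iff]
    constructor
    · rintro ⟨hv1, f, hf0, hfv, hfv₀⟩
      obtain ⟨hvS, hvne'⟩ := Finset.mem_sdiff.mp hv1
      have hvne : v ≠ v₀ := by simpa using hvne'
      have hvU : v ∈ V1 ∪ V2 ∪ V3 := by rw [hunion]; exact hvS
      rcases Finset.mem_union.mp hvU with h | h3
      · rcases Finset.mem_union.mp h with h1 | h2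
        · exfalso
          have := partB v (Finset.mem_union_left _ h1) f hf0 hfv
          linarith
        · exact ⟨h2, hvne⟩
      · exfalso
        have := partB v (Finset.mem_union_right _ h3) f hf0 hfv
        linarith
    · rintro ⟨hv2, hvne⟩
      have hv' : v ∈ V2 \ ({v₀} : Finset (Fin (2 * n) → ℝ)) := by
        rw [Finset.mem_sdiff, Finset.mem_singleton]; exact ⟨hv2, hvne⟩
      refine ⟨?_, partA v hv'⟩
      rw [Finset.mem_sdiff, Finset.mem_singleton]
      exact ⟨hsub2 hv2, hvne⟩
  refine ⟨partA, partB, ?_⟩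
  rw [hsetEq, Set.ncard_coe_finset,
    Finset.card_sdiff_of_subset (Finset.singleton_subset_iff.mpr hv₀), Finset.card_singleton]
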